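/- Let n, k be positive integers with n ≥ 2(k+1), let G be the web graph W_n^k, and let C ⊆ V(G) be arbitrary (possibly empty). Set m := n − 2k if C = V(G) and m := n − 2k + 1 otherwise. Then γ_gr(G;C) = m if and only if (i) C = V(G), or (ii) there exists i ∈ V(G) ∖ C such that the subgraph of G induced by V(G) ∖ N[i] is a path on t = n − 2k − 1 vertices and C ∩ (V(G) ∖ N[i]) is a good configuration for that path; in all other cases γ_gr(G;C) = m − 1. -/

import Mathlib

namespace LegalSeq

variable {V : Type*}

/-- The generalized neighborhood `N⟨v⟩`: the closed neighborhood of `v` if `v ∈ C`,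
the open neighborhood otherwise. -/
noncomputable def gN [Fintype V] (G : SimpleGraph V) (C : Set V) (v : V) : Finset V := by
  classical
  exact (Set.toFinite (if v ∈ C then insert v (G.neighborSet v) else G.neighborSet v)).toFinset

/-- Union of the generalized neighborhoods of the vertices of a list. -/
noncomputable def nUnion [Fintype V] (G : SimpleGraph V) (C : Set V) (l : List V) : Finset V := by
  classical
  exact l.toFinset.biUnion (gN G C)

/-- A list of pairwise distinct vertices is a legal sequence if every vertex of the sequence,
except possibly the first one, has a generalized neighbor that is not in the generalized
neighborhood of any preceding vertex. -/
def IsLegal [Fintype V] (G : SimpleGraph V) (C : Set V) (l : List V) : Prop :=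
  l.Nodup ∧ ∀ (i : ℕ) (h : i < l.length), 0 < i →
    ¬ (gN G C (l.get ⟨i, h⟩) ⊆ nUnion G C (l.take i))

/-- A sequence is dominating if the generalized neighborhoods of its members cover all vertices. -/
def IsDom [Fintype V] (G : SimpleGraph V) (C : Set V) (l : List V) : Prop :=
  nUnion G C l = Finset.univ

/-- The Grundy domination number of the instance `(G; C)`: the maximum length of a sequence
that is both legal and dominating. -/
noncomputable def grundy [Fintype V] (G : SimpleGraph V) (C : Set V) : ℕ :=
  sSup {k : ℕ | ∃ l : List V, IsLegal G C l ∧ IsDom G C l ∧ l.length = k}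

/-- The path graph `P_t` on the vertex set `{1, …, t}`, with edges `{i, i+1}`. -/
def pathG (t : ℕ) : SimpleGraph ↥(Set.Icc 1 t) where
  Adj u v := (u : ℕ) + 1 = (v : ℕ) ∨ (v : ℕ) + 1 = (u : ℕ)
  symm := ⟨by intro u v h; tauto⟩
  loopless := ⟨by intro u h; rcases h with h | h <;> omega⟩

/-- `GoodConf C a b` : `C` is a good configuration for the path with vertex set `{a, …, b}`
(labels taken in `ℕ`, edges between consecutive integers). -/
inductive GoodConf (C : Set ℕ) : ℕ → ℕ → Prop
  | single (a : ℕ) (h : a ∈ C) : GoodConf C a a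
  | pair (a : ℕ) (h : ¬(a ∈ C ∧ a + 1 ∈ C)) : GoodConf C a (a + 1)
  | left (a b : ℕ) (h : a + 2 ≤ b) (ha : a ∉ C) (hg : GoodConf C (a + 2) b) : GoodConf C a b
  | right (a b : ℕ) (h : a + 2 ≤ b) (hb : b ∉ C) (hg : GoodConf C a (b - 2)) : GoodConf C a b

/-- The web graph `W_n^k`: vertices `{0, …, n−1}`, with `i ~ j` iff `0 < |i − j| ≤ k` or
`|i − j| ≥ n − k`. -/
def webG (n k : ℕ) : SimpleGraph (Fin n) where
  Adj i j := i ≠ j ∧ (Nat.dist i.1 j.1 ≤ k ∨ n - k ≤ Nat.dist i.1 j.1)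
  symm := by
    constructor
    intro i j h
    refine ⟨h.1.symm, ?_⟩
    rw [Nat.dist_comm]
    exact h.2
  loopless := ⟨fun i h => h.1 rfl⟩

/-- Condition (ii) of Statement 5: there is `i ∉ C` such that the subgraph of `W_n^k` induced
by `V ∖ N[i]` is a path on `t = n − 2k − 1` vertices and `C` restricted to it is a good
configuration with respect to the linear order of the path. -/
def WebPathCond (n k : ℕ) (C : Set (Fin n)) : Prop :=
  ∃ i : Fin n, i ∉ C ∧
    ∃ e : pathG (n - 2 * k - 1) ≃g
        ((webG n k).induce {v : Fin n | v ≠ i ∧ ¬ (webG n k).Adj i v}),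
      GoodConf {a : ℕ | ∃ h : a ∈ Set.Icc 1 (n - 2 * k - 1), ((e ⟨a, h⟩ : _) : Fin n) ∈ C}
        1 (n - 2 * k - 1)

section Basic

variable [Fintype V] (G : SimpleGraph V) (C : Set V)

lemma mem_gN {x v : V} : x ∈ gN G C v ↔ G.Adj v x ∨ (x = v ∧ v ∈ C) := by
  classical
  simp only [gN, Set.Finite.mem_toFinset]
  split_ifs with h
  · simp only [Set.mem_insert_iff, SimpleGraph.mem_neighborSet]; tauto
  · simp only [SimpleGraph.mem_neighborSet]; tauto

lemma mem_nUnion {x : V} {l : List V} :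
    x ∈ nUnion G C l ↔ ∃ v ∈ l, x ∈ gN G C v := by
  classical
  simp [nUnion]

lemma nUnion_nil : nUnion G C [] = ∅ := by
  classical ext x; simp [mem_nUnion]

lemma nUnion_cons [DecidableEq V] (v : V) (l : List V) :
    nUnion G C (v :: l) = gN G C v ∪ nUnion G C l := by
  ext x
  simp only [mem_nUnion, Finset.mem_union, List.mem_cons, exists_eq_or_imp]

lemma nUnion_append [DecidableEq V] (l₁ l₂ : List V) :
    nUnion G C (l₁ ++ l₂) = nUnion G C l₁ ∪ nUnion G C l₂ := by
  ext x
  simp only [mem_nUnion, Finset.mem_union, List.mem_append]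
  constructor
  · rintro ⟨v, hv | hv, hx⟩
    · exact Or.inl ⟨v, hv, hx⟩
    · exact Or.inr ⟨v, hv, hx⟩
  · rintro (⟨v, hv, hx⟩ | ⟨v, hv, hx⟩) <;> exact ⟨v, by tauto, hx⟩

lemma nUnion_singleton (v : V) : nUnion G C [v] = gN G C v := by
  classical ext x; simp [mem_nUnion]

lemma nUnion_take_succ [DecidableEq V] (l : List V) (j : ℕ) (hj : j < l.length) :
    nUnion G C (l.take (j+1)) = nUnion G C (l.take j) ∪ gN G C l[j] := by
  rw [List.take_succ, List.getElem?_eq_getElem hj]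
  rw [Option.toList_some, nUnion_append, nUnion_singleton]

end Basic

section Rot

/-- rotation in `Fin n` by a natural offset, with explicit value. -/
def rot {n : ℕ} (i : Fin n) (s : ℕ) : Fin n := ⟨(i.1 + s) % n, Nat.mod_lt _ i.pos⟩

lemma rot_val {n : ℕ} (i : Fin n) (s : ℕ) : (rot i s).1 = (i.1 + s) % n := rfl

lemma mod2 {x n : ℕ} (hn : 0 < n) (h : x < 2 * n) : x % n = if x < n then x else x - n := by
  split_ifs with h'
  · exact Nat.mod_eq_of_lt h'
  · rw [Nat.mod_eq_sub_mod (by omega)]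
    exact Nat.mod_eq_of_lt (by omega)

lemma rot_zero {n : ℕ} (i : Fin n) : rot i 0 = i := by
  apply Fin.ext
  simp [rot_val, Nat.mod_eq_of_lt i.2]

lemma rot_inj {n : ℕ} (i : Fin n) {s s' : ℕ} (hs : s < n) (hs' : s' < n) :
    rot i s = rot i s' ↔ s = s' := by
  have ha := i.2
  rw [Fin.ext_iff, rot_val, rot_val, mod2 i.pos (by omega), mod2 i.pos (by omega)]
  split_ifs <;> omega

lemma mod2' (x : ℕ) {n : ℕ} (hn : 0 < n) (h : x < 2 * n) :
    x % n = if x < n then x else x - n := mod2 hn h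

lemma rot_surj {n : ℕ} (i : Fin n) (x : Fin n) : ∃ s, s < n ∧ x = rot i s := by
  have ha := i.2; have hx := x.2
  set s := (x.1 + n - i.1) % n with hsdef
  have hs2 : s < n := Nat.mod_lt _ i.pos
  have hsv : s = if x.1 + n - i.1 < n then x.1 + n - i.1 else x.1 + n - i.1 - n :=
    mod2' (x.1 + n - i.1) i.pos (by omega)
  refine ⟨s, hs2, Fin.ext ?_⟩
  rw [rot_val, mod2' (i.1 + s) i.pos (by omega)]
  split_ifs at hsv ⊢ <;> omega

lemma off_rot {n : ℕ} (i : Fin n) {s : ℕ} (hs : s < n) :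
    ((rot i s).1 + n - i.1) % n = s := by
  have ha := i.2
  rw [rot_val, mod2' (i.1 + s) i.pos (by omega)]
  split_ifs with h1
  · rw [mod2' (i.1 + s + n - i.1) i.pos (by omega)]
    split_ifs <;> omega
  · rw [mod2' (i.1 + s - n + n - i.1) i.pos (by omega)]
    split_ifs <;> omega

lemma rot_off {n : ℕ} (i x : Fin n) : rot i ((x.1 + n - i.1) % n) = x := by
  have ha := i.2; have hx := x.2
  set s := (x.1 + n - i.1) % n with hsdef
  have hs2 : s < n := Nat.mod_lt _ i.pos
  have hsv : s = if x.1 + n - i.1 < n then x.1 + n - i.1 else x.1 + n - i.1 - n :=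
    mod2' (x.1 + n - i.1) i.pos (by omega)
  apply Fin.ext
  rw [rot_val, mod2' (i.1 + s) i.pos (by omega)]
  split_ifs at hsv ⊢ <;> omega

variable {n k : ℕ} (hk : 1 ≤ k) (hn : 2 * (k + 1) ≤ n)

lemma webG_adj {x y : Fin n} :
    (webG n k).Adj x y ↔ x ≠ y ∧ (Nat.dist x.1 y.1 ≤ k ∨ n - k ≤ Nat.dist x.1 y.1) :=
  Iff.rfl

include hk hn in
lemma adj_rot (i : Fin n) {s s' : ℕ} (hs : s < n) (hs' : s' < n) :
    (webG n k).Adj (rot i s) (rot i s') ↔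
      s ≠ s' ∧ (Nat.dist s s' ≤ k ∨ n - k ≤ Nat.dist s s') := by
  have ha := i.2
  rw [webG_adj, Ne, Fin.ext_iff, rot_val, rot_val, Nat.dist, Nat.dist,
    mod2 i.pos (by omega), mod2 i.pos (by omega)]
  split_ifs <;> omega

end Rot

section WebCard

variable {n k : ℕ} (hk : 1 ≤ k) (hn : 2 * (k + 1) ≤ n) (C : Set (Fin n))

/-- offsets of the neighbors of a vertex in the web graph -/
def webD (n k : ℕ) : Finset ℕ := Finset.Icc 1 k ∪ Finset.Icc (n-k) (n-1)

lemma mem_webD {s : ℕ} : s ∈ webD n k ↔ ((1 ≤ s ∧ s ≤ k) ∨ (n - k ≤ s ∧ s ≤ n-1)) := by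
  simp [webD]

include hk hn

lemma webD_lt : ∀ s ∈ webD n k, s < n := by
  intro s hs
  rw [mem_webD] at hs
  omega

lemma adj_rot_zero (v : Fin n) {s : ℕ} (hs : s < n) :
    (webG n k).Adj v (rot v s) ↔ s ∈ webD n k := by
  have h := adj_rot hk hn v (show 0 < n by omega) hs
  rw [rot_zero] at h
  rw [h, mem_webD, Nat.dist_zero_left]
  omega

lemma rot_eq_self_iff (v : Fin n) {s : ℕ} (hs : s < n) : rot v s = v ↔ s = 0 := by
  have h := rot_inj (s := s) (s' := 0) v hs (show 0 < n by omega)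
  rw [rot_zero] at h
  exact h

lemma mem_gN_web_iff (v : Fin n) {s : ℕ} (hs : s < n) :
    rot v s ∈ gN (webG n k) C v ↔ (s ∈ webD n k ∨ (s = 0 ∧ v ∈ C)) := by
  rw [mem_gN, adj_rot_zero hk hn v hs, rot_eq_self_iff hk hn v hs]

lemma gN_web_eq_not {v : Fin n} (hv : v ∉ C) :
    gN (webG n k) C v = (webD n k).image (rot v) := by
  classical
  ext x
  obtain ⟨s, hs, rfl⟩ := rot_surj v x
  rw [mem_gN_web_iff hk hn C v hs, Finset.mem_image]
  constructor
  · rintro (h | ⟨_, hc⟩)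
    · exact ⟨s, h, rfl⟩
    · exact absurd hc hv
  · rintro ⟨a, ha, hrot⟩
    have := (rot_inj v (webD_lt hk hn a ha) hs).mp hrot
    subst this
    exact Or.inl ha

lemma gN_web_eq_mem {v : Fin n} (hv : v ∈ C) :
    gN (webG n k) C v = insert v ((webD n k).image (rot v)) := by
  classical
  ext x
  obtain ⟨s, hs, rfl⟩ := rot_surj v x
  rw [mem_gN_web_iff hk hn C v hs, Finset.mem_insert, Finset.mem_image,
    rot_eq_self_iff hk hn v hs]
  constructor
  · rintro (h | ⟨h0, _⟩)
    · exact Or.inr ⟨s, h, rfl⟩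
    · exact Or.inl h0
  · rintro (h0 | ⟨a, ha, hrot⟩)
    · exact Or.inr ⟨h0, hv⟩
    · have := (rot_inj v (webD_lt hk hn a ha) hs).mp hrot
      subst this
      exact Or.inl ha

lemma card_webD : (webD n k).card = 2 * k := by
  rw [webD, Finset.card_union_of_disjoint, Nat.card_Icc, Nat.card_Icc]
  · omega
  · rw [Finset.disjoint_left]
    intro a ha hb
    simp only [Finset.mem_Icc] at ha hb
    omega

lemma card_image_webD (v : Fin n) : ((webD n k).image (rot v)).card = 2 * k := by
  rw [Finset.card_image_of_injOn, card_webD hk hn]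
  intro a ha b hb hab
  exact (rot_inj v (webD_lt hk hn a ha) (webD_lt hk hn b hb)).mp hab

lemma card_gN_web_not {v : Fin n} (hv : v ∉ C) :
    (gN (webG n k) C v).card = 2 * k := by
  rw [gN_web_eq_not hk hn C hv, card_image_webD hk hn]

lemma card_gN_web_mem {v : Fin n} (hv : v ∈ C) :
    (gN (webG n k) C v).card = 2 * k + 1 := by
  classical
  rw [gN_web_eq_mem hk hn C hv, Finset.card_insert_of_notMem, card_image_webD hk hn]
  rw [Finset.mem_image]
  rintro ⟨a, ha, hrot⟩
  have := (rot_eq_self_iff hk hn v (webD_lt hk hn a ha)).mp hrot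
  rw [mem_webD] at ha
  omega

lemma mem_gN_web_rot (i : Fin n) {s s' : ℕ} (hs : s < n) (hs' : s' < n) :
    rot i s' ∈ gN (webG n k) C (rot i s) ↔
      ((s' = s ∧ rot i s ∈ C) ∨
        (s ≠ s' ∧ ((s - s') + (s' - s) ≤ k ∨ n - k ≤ (s - s') + (s' - s)))) := by
  have hd : Nat.dist s s' = (s - s') + (s' - s) := rfl
  rw [mem_gN, adj_rot hk hn i hs hs', rot_inj i hs' hs, hd]
  tauto

lemma card_gN_web_ge (v : Fin n) : 2 * k ≤ (gN (webG n k) C v).card := by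
  by_cases hv : v ∈ C
  · rw [card_gN_web_mem hk hn C hv]; omega
  · rw [card_gN_web_not hk hn C hv]

end WebCard

section Counting

variable [Fintype V] (G : SimpleGraph V) (C : Set V)

lemma nUnion_take_one {l : List V} (h0 : 0 < l.length) :
    nUnion G C (l.take 1) = gN G C l[0] := by
  classical
  rw [show (1:ℕ) = 0 + 1 from rfl, nUnion_take_succ G C l 0 h0]
  simp [nUnion_nil]

lemma legal_grow {l : List V} (hleg : IsLegal G C l) {j : ℕ} (h0 : 0 < j)
    (hj : j < l.length) :
    nUnion G C (l.take j) ⊂ nUnion G C (l.take (j+1)) := by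
  classical
  have hns := hleg.2 j hj h0
  rw [List.get_eq_getElem] at hns
  obtain ⟨v, hv1, hv2⟩ := Finset.not_subset.mp hns
  rw [nUnion_take_succ G C l j hj]
  exact Finset.ssubset_iff_of_subset Finset.subset_union_left |>.mpr
    ⟨v, Finset.mem_union_right _ hv1, hv2⟩

lemma legal_card_lower {l : List V} (hleg : IsLegal G C l) (h0 : 0 < l.length) :
    ∀ j, 1 ≤ j → j ≤ l.length →
      (gN G C (l[0]'h0)).card + (j - 1) ≤ (nUnion G C (l.take j)).card := by
  intro j
  induction j with
  | zero => intro h1 _; exact absurd h1 (by omega)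
  | succ j ih =>
    intro h1 hj
    rcases Nat.lt_or_ge j 1 with hj0 | hj1
    · have : j = 0 := by omega
      subst this
      rw [nUnion_take_one G C (by omega)]
      simp
    · have hlt : j < l.length := by omega
      have h2 := Finset.card_lt_card (legal_grow G C hleg hj1 hlt)
      have h3 := ih (by omega) (by omega)
      omega

lemma legal_card_upper {l : List V} (hleg : IsLegal G C l) :
    ∀ d j, j + d = l.length → 1 ≤ j →
      (nUnion G C (l.take j)).card + d ≤ Fintype.card V := by
  intro d
  induction d with
  | zero =>
    intro j hj _
    have := Finset.card_le_univ (nUnion G C (l.take j))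
    simpa using this
  | succ d ih =>
    intro j hj h1
    have hlt : j < l.length := by omega
    have h2 := Finset.card_lt_card (legal_grow G C hleg (by omega) hlt)
    have h3 := ih (j+1) (by omega) (by omega)
    omega

end Counting

section BaseConstruction

variable {n k : ℕ} (hk : 1 ≤ k) (hn : 2 * (k + 1) ≤ n) (C : Set (Fin n))

include hk hn

lemma base_exists :
    ∃ l : List (Fin n), IsLegal (webG n k) C l ∧ IsDom (webG n k) C l ∧
      l.length = n - 2 * k := by
  classical
  have h0 : 0 < n := by omega
  set z : Fin n := ⟨0, h0⟩ with hz
  set l : List (Fin n) := (List.range (n - 2*k)).map (fun j => rot z j) with hl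
  have hlen : l.length = n - 2*k := by simp [hl]
  have hget : ∀ (j : ℕ) (hj : j < l.length), l[j] = rot z j := by
    intro j hj
    simp [hl]
  have htake : ∀ j, j ≤ n - 2*k → ∀ x, (x ∈ nUnion (webG n k) C (l.take j) ↔
      ∃ j' < j, x ∈ gN (webG n k) C (rot z j')) := by
    intro j hj x
    rw [mem_nUnion]
    constructor
    · rintro ⟨v, hv, hx⟩
      rw [hl, ← List.map_take, List.take_range, List.mem_map] at hv
      obtain ⟨j', hj', rfl⟩ := hv
      rw [List.mem_range] at hj'
      exact ⟨j', by omega, hx⟩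
    · rintro ⟨j', hj', hx⟩
      refine ⟨rot z j', ?_, hx⟩
      rw [hl, ← List.map_take, List.take_range, List.mem_map]
      exact ⟨j', by rw [List.mem_range]; omega, rfl⟩
  refine ⟨l, ⟨?_, ?_⟩, ?_, hlen⟩
  · -- nodup
    rw [hl]
    refine List.Nodup.map_on ?_ List.nodup_range
    intro a ha b hb hab
    rw [List.mem_range] at ha hb
    exact (rot_inj z (by omega) (by omega)).mp hab
  · -- legality
    intro j hj h0j
    have hjn : j < n - 2*k := by rw [hlen] at hj; exact hj
    rw [List.get_eq_getElem, hget j hj]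
    rw [Finset.not_subset]
    refine ⟨rot z (j + k), ?_, ?_⟩
    · rw [mem_gN_web_rot hk hn C z (by omega) (by omega)]
      right
      omega
    · rw [htake j (by omega)]
      rintro ⟨j', hj', hmem⟩
      rw [mem_gN_web_rot hk hn C z (by omega) (by omega)] at hmem
      rcases hmem with ⟨heq, _⟩ | ⟨_, hd⟩ <;> omega
  · -- dom
    rw [IsDom, Finset.eq_univ_iff_forall]
    intro x
    obtain ⟨s, hs, rfl⟩ := rot_surj z x
    have htl : l.take (n - 2*k) = l := by
      rw [← hlen]; exact List.take_length
    rw [← htl, htake _ (le_refl _)]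
    by_cases hs0 : s = 0
    · refine ⟨1, by omega, ?_⟩
      rw [mem_gN_web_rot hk hn C z (by omega) (by omega)]
      right; omega
    · by_cases hs1 : s ≤ n - 2*k
      · refine ⟨s - 1, by omega, ?_⟩
        rw [mem_gN_web_rot hk hn C z (by omega) (by omega)]
        right; omega
      · by_cases hs2 : s ≤ n - k - 1
        · refine ⟨n - 2*k - 1, by omega, ?_⟩
          rw [mem_gN_web_rot hk hn C z (by omega) (by omega)]
          right; omega
        · refine ⟨0, by omega, ?_⟩
          rw [mem_gN_web_rot hk hn C z (by omega) (by omega)]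
          right; omega

end BaseConstruction

section Exact

variable {n k : ℕ} (hk : 1 ≤ k) (hn : 2 * (k + 1) ≤ n) (C : Set (Fin n)) {l : List (Fin n)}

include hk hn

lemma exact_facts (hleg : IsLegal (webG n k) C l) (hdom : IsDom (webG n k) C l)
    (hlen : l.length = n - 2*k + 1) (h0 : 0 < l.length) :
    l[0] ∉ C ∧
    (∀ j (_ : 1 ≤ j) (hj2 : j < l.length),
      ∃ w, gN (webG n k) C (l[j]'hj2) ∩ (Finset.univ \ nUnion (webG n k) C (l.take j)) = {w} ∧
        Finset.univ \ nUnion (webG n k) C (l.take (j+1)) =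
          (Finset.univ \ nUnion (webG n k) C (l.take j)).erase w) := by
  classical
  have hup : ∀ j, 1 ≤ j → j ≤ l.length →
      (nUnion (webG n k) C (l.take j)).card + (l.length - j) ≤ n := by
    intro j h1 hj
    have h := legal_card_upper (webG n k) C hleg (l.length - j) j (by omega) h1
    rw [Fintype.card_fin] at h
    omega
  have hc0ge := card_gN_web_ge hk hn C (l[0]'h0)
  have hA := hup 1 (le_refl 1) (by omega)
  rw [nUnion_take_one _ _ h0] at hA
  have hnotC : l[0] ∉ C := by
    intro hC
    have := card_gN_web_mem hk hn C hC
    omega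
  have hc0 : (gN (webG n k) C (l[0]'h0)).card = 2*k := card_gN_web_not hk hn C hnotC
  have hlow := legal_card_lower (webG n k) C hleg h0
  have hcards : ∀ j, 1 ≤ j → j ≤ l.length →
      (nUnion (webG n k) C (l.take j)).card = 2*k + (j-1) := by
    intro j h1 hj
    have hl := hlow j h1 hj
    have hu := hup j h1 hj
    omega
  refine ⟨hnotC, ?_⟩
  intro j h1 hj
  have hstep : (gN (webG n k) C l[j] \ nUnion (webG n k) C (l.take j)).card = 1 := by
    have e1 := hcards j h1 (by omega)
    have e2 := hcards (j+1) (by omega) (by omega)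
    rw [nUnion_take_succ _ _ l j hj] at e2
    have hcard : (nUnion (webG n k) C (l.take j) ∪ gN (webG n k) C l[j]).card =
        (nUnion (webG n k) C (l.take j)).card +
        (gN (webG n k) C l[j] \ nUnion (webG n k) C (l.take j)).card := by
      rw [← Finset.union_sdiff_self_eq_union, Finset.card_union_of_disjoint Finset.disjoint_sdiff]
    omega
  obtain ⟨w, hw⟩ := Finset.card_eq_one.mp hstep
  have hmemw : ∀ x, x ∈ gN (webG n k) C l[j] → x ∉ nUnion (webG n k) C (l.take j) → x = w := by
    intro x hx1 hx2
    have : x ∈ gN (webG n k) C l[j] \ nUnion (webG n k) C (l.take j) :=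
      Finset.mem_sdiff.mpr ⟨hx1, hx2⟩
    rw [hw] at this
    exact Finset.mem_singleton.mp this
  have hwmem : w ∈ gN (webG n k) C l[j] ∧ w ∉ nUnion (webG n k) C (l.take j) := by
    have : w ∈ gN (webG n k) C l[j] \ nUnion (webG n k) C (l.take j) := by
      rw [hw]; exact Finset.mem_singleton_self w
    exact Finset.mem_sdiff.mp this
  refine ⟨w, ?_, ?_⟩
  · ext x
    rw [← hw]
    simp only [Finset.mem_inter, Finset.mem_sdiff, Finset.mem_univ, true_and]
  · rw [nUnion_take_succ _ _ l j hj]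
    ext x
    simp only [Finset.mem_sdiff, Finset.mem_univ, Finset.mem_union, Finset.mem_erase, true_and]
    constructor
    · intro hx
      push_neg at hx
      refine ⟨fun hxw => hx.2 (hxw ▸ hwmem.1), hx.1⟩
    · rintro ⟨hne, hnX⟩
      rintro (h | h)
      · exact hnX h
      · exact hne (hmemw x h hnX)

lemma W_final (hdom : IsDom (webG n k) C l) :
    Finset.univ \ nUnion (webG n k) C (l.take l.length) = ∅ := by
  rw [List.take_length, hdom]
  simp

lemma W1_char (h0 : 0 < l.length) (hi : l[0] ∉ C) :
    ∀ s, s < n → (rot (l[0]'h0) s ∈ Finset.univ \ nUnion (webG n k) C (l.take 1) ↔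
      (s = 0 ∨ (k+1 ≤ s ∧ s ≤ n-k-1))) := by
  intro s hs
  simp only [Finset.mem_sdiff, Finset.mem_univ, true_and]
  rw [nUnion_take_one _ _ h0, mem_gN_web_iff hk hn C _ hs, mem_webD]
  simp only [hi, and_false, or_false]
  omega

end Exact

section ListHelper

lemma append_singleton_decomp {α : Type*} {M : List α} {y : α} :
    ∀ {pre : List α} {u : α} {post : List α}, M ++ [y] = pre ++ u :: post →
      (∃ post', M = pre ++ u :: post') ∨ (pre = M ∧ u = y ∧ post = []) := by
  induction M with
  | nil =>
    intro pre u post h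
    rcases pre with _ | ⟨p, pre'⟩
    · simp_all
    · simp only [List.nil_append, List.cons_append, List.cons.injEq] at h
      exact absurd h.2 (by simp [eq_comm, List.append_eq_nil_iff])
  | cons m M' ih =>
    intro pre u post h
    rcases pre with _ | ⟨p, pre'⟩
    · simp only [List.cons_append, List.nil_append, List.cons.injEq] at h
      exact Or.inl ⟨M', by simp [h.1]⟩
    · simp only [List.cons_append, List.cons.injEq] at h
      obtain ⟨rfl, h2⟩ := h
      rcases ih h2 with ⟨post', hp⟩ | ⟨hp1, hp2, hp3⟩
      · exact Or.inl ⟨post', by simp [hp]⟩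
      · exact Or.inr ⟨by simp [hp1], hp2, hp3⟩

end ListHelper

section Construction

variable {n k : ℕ} (hk : 1 ≤ k) (hn : 2 * (k + 1) ≤ n) (C : Set (Fin n))
variable (f : ℕ → Fin n) (S : Set ℕ) (t : ℕ)

lemma mem_nUnion_map (lst : List ℕ) (v : Fin n) :
    v ∈ nUnion (webG n k) C (lst.map f) ↔ ∃ x ∈ lst, v ∈ gN (webG n k) C (f x) := by
  classical
  rw [mem_nUnion]
  constructor
  · rintro ⟨w, hw, hv⟩
    rw [List.mem_map] at hw
    obtain ⟨x, hx, rfl⟩ := hw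
    exact ⟨x, hx, hv⟩
  · rintro ⟨x, hx, hv⟩
    exact ⟨f x, List.mem_map_of_mem hx, hv⟩

/-- the key local structure: membership in generalized neighborhoods along the path -/
lemma mem_gN_f
    (hinj : ∀ a ∈ Finset.Icc 1 t, ∀ b ∈ Finset.Icc 1 t, f a = f b → a = b)
    (hadj : ∀ a b, a ∈ Finset.Icc 1 t → b ∈ Finset.Icc 1 t →
      ((webG n k).Adj (f a) (f b) ↔ (a + 1 = b ∨ b + 1 = a)))
    (hS : ∀ a ∈ Finset.Icc 1 t, (a ∈ S ↔ f a ∈ C))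
    {x y : ℕ} (hx : x ∈ Finset.Icc 1 t) (hy : y ∈ Finset.Icc 1 t) :
    f y ∈ gN (webG n k) C (f x) ↔ ((x + 1 = y ∨ y + 1 = x) ∨ (y = x ∧ x ∈ S)) := by
  rw [mem_gN]
  constructor
  · rintro (hadj' | ⟨heq, hC⟩)
    · exact Or.inl ((hadj x y hx hy).mp hadj')
    · have := hinj y hy x hx heq
      exact Or.inr ⟨this, (hS x hx).mpr (this ▸ hC)⟩
  · rintro (hpm | ⟨heq, hxS⟩)
    · exact Or.inl ((hadj x y hx hy).mpr hpm)
    · exact Or.inr ⟨by rw [heq], (hS x hx).mp hxS⟩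

lemma seq_exists
    (hinj : ∀ a ∈ Finset.Icc 1 t, ∀ b ∈ Finset.Icc 1 t, f a = f b → a = b)
    (hadj : ∀ a b, a ∈ Finset.Icc 1 t → b ∈ Finset.Icc 1 t →
      ((webG n k).Adj (f a) (f b) ↔ (a + 1 = b ∨ b + 1 = a)))
    (hS : ∀ a ∈ Finset.Icc 1 t, (a ∈ S ↔ f a ∈ C)) :
    ∀ c d : ℕ, GoodConf S c d → 1 ≤ c → d ≤ t →
    ∃ lst : List ℕ,
      lst.Nodup ∧
      (∀ x ∈ lst, x ∈ Finset.Icc c d) ∧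
      lst.length = d + 1 - c ∧
      (∀ v ∈ nUnion (webG n k) C (lst.map f),
        ∃ a ∈ Finset.Icc c d, v ∈ gN (webG n k) C (f a)) ∧
      (∀ a ∈ Finset.Icc c d, f a ∈ nUnion (webG n k) C (lst.map f)) ∧
      (∀ X : Finset (Fin n), (∀ a ∈ Finset.Icc c d, f a ∉ X) →
        ∀ pre u post, lst = pre ++ u :: post →
          ¬ gN (webG n k) C (f u) ⊆ X ∪ nUnion (webG n k) C (pre.map f)) := by
  classical
  have hG : ∀ {x y : ℕ}, x ∈ Finset.Icc 1 t → y ∈ Finset.Icc 1 t →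
      (f y ∈ gN (webG n k) C (f x) ↔ ((x + 1 = y ∨ y + 1 = x) ∨ (y = x ∧ x ∈ S))) :=
    fun hx hy => mem_gN_f C f S t hinj hadj hS hx hy
  intro c d hg
  induction hg with
  | single a ha =>
    intro h1 ht
    have hat : a ∈ Finset.Icc 1 t := by rw [Finset.mem_Icc]; omega
    refine ⟨[a], by simp, by simp, by simp, ?_, ?_, ?_⟩
    · intro v hv
      rw [List.map_singleton, nUnion_singleton] at hv
      exact ⟨a, by simp, hv⟩
    · intro x hx
      rw [Finset.mem_Icc] at hx
      have : x = a := by omega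
      subst this
      rw [List.map_singleton, nUnion_singleton, hG hat hat]
      exact Or.inr ⟨rfl, ha⟩
    · intro X hX pre u post hdecomp
      rcases pre with _ | ⟨p, pre'⟩
      · rw [List.nil_append] at hdecomp
        injection hdecomp with h1' h2'
        subst h1'
        rw [Finset.not_subset]
        refine ⟨f a, (hG hat hat).mpr (Or.inr ⟨rfl, ha⟩), ?_⟩
        simp only [Finset.mem_union, List.map_nil, nUnion_nil, Finset.notMem_empty, or_false]
        exact hX a (by simp)
      · simp only [List.cons_append, List.cons.injEq] at hdecomp
        exact absurd hdecomp.2 (by simp [eq_comm, List.append_eq_nil_iff])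
  | pair a hpr =>
    intro h1 ht
    have hat : a ∈ Finset.Icc 1 t := by rw [Finset.mem_Icc]; omega
    have hat1 : a + 1 ∈ Finset.Icc 1 t := by rw [Finset.mem_Icc]; omega
    -- decide which of a, a+1 is outside S
    have hkey : ∀ u v : ℕ, ((u = a ∧ v = a + 1) ∨ (u = a + 1 ∧ v = a)) → u ∉ S →
      ∃ lst : List ℕ,
      lst.Nodup ∧
      (∀ x ∈ lst, x ∈ Finset.Icc a (a+1)) ∧
      lst.length = (a+1) + 1 - a ∧
      (∀ w ∈ nUnion (webG n k) C (lst.map f),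
        ∃ x ∈ Finset.Icc a (a+1), w ∈ gN (webG n k) C (f x)) ∧
      (∀ x ∈ Finset.Icc a (a+1), f x ∈ nUnion (webG n k) C (lst.map f)) ∧
      (∀ X : Finset (Fin n), (∀ x ∈ Finset.Icc a (a+1), f x ∉ X) →
        ∀ pre u' post, lst = pre ++ u' :: post →
          ¬ gN (webG n k) C (f u') ⊆ X ∪ nUnion (webG n k) C (pre.map f)) := by
      intro u v huv huS
      have hut : u ∈ Finset.Icc 1 t := by rw [Finset.mem_Icc]; omega
      have hvt : v ∈ Finset.Icc 1 t := by rw [Finset.mem_Icc]; omega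
      have huvne : u ≠ v := by omega
      have hadjuv : u + 1 = v ∨ v + 1 = u := by omega
      refine ⟨[u, v], by simp [huvne], ?_, by simp only [List.length_cons, List.length_nil]; omega,
        ?_, ?_, ?_⟩
      · intro x hx
        rw [List.mem_cons, List.mem_singleton] at hx
        rcases hx with rfl | rfl <;> (rw [Finset.mem_Icc]; omega)
      · intro w hw
        rw [mem_nUnion_map] at hw
        obtain ⟨x, hx, hw⟩ := hw
        rw [List.mem_cons, List.mem_singleton] at hx
        rcases hx with h' | h'
        · exact ⟨x, by rw [Finset.mem_Icc]; omega, hw⟩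
        · exact ⟨x, by rw [Finset.mem_Icc]; omega, hw⟩
      · intro x hx
        rw [Finset.mem_Icc] at hx
        rw [mem_nUnion_map]
        rcases (by omega : x = u ∨ x = v) with h' | h'
        · exact ⟨v, by simp, by rw [h']; exact (hG hvt hut).mpr (Or.inl (by omega))⟩
        · exact ⟨u, by simp, by rw [h']; exact (hG hut hvt).mpr (Or.inl (by omega))⟩
      · intro X hX pre u' post hdecomp
        have hXu : f u ∉ X := hX u (by rw [Finset.mem_Icc]; omega)
        have hXv : f v ∉ X := hX v (by rw [Finset.mem_Icc]; omega)
        rcases pre with _ | ⟨p, pre'⟩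
        · rw [List.nil_append] at hdecomp
          injection hdecomp with h1' h2'
          subst h1'
          rw [Finset.not_subset]
          refine ⟨f v, (hG hut hvt).mpr (Or.inl (by omega)), ?_⟩
          simp only [Finset.mem_union, List.map_nil, nUnion_nil, Finset.notMem_empty, or_false]
          exact hXv
        · rcases pre' with _ | ⟨p2, pre''⟩
          · simp only [List.cons_append, List.nil_append, List.cons.injEq] at hdecomp
            obtain ⟨rfl, h1', _⟩ := hdecomp
            subst h1'
            rw [Finset.not_subset]
            refine ⟨f u, (hG hvt hut).mpr (Or.inl (by omega)), ?_⟩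
            simp only [Finset.mem_union, List.map_cons, List.map_nil, nUnion_cons, nUnion_nil,
              Finset.union_empty, Finset.mem_union]
            push_neg
            refine ⟨hXu, ?_⟩
            rw [hG hut hut]
            push_neg
            refine ⟨by omega, fun _ => huS⟩
          · simp only [List.cons_append, List.cons.injEq] at hdecomp
            exact absurd hdecomp.2.2 (by simp [eq_comm, List.append_eq_nil_iff])
    by_cases haS : a ∈ S
    · have hbS : a + 1 ∉ S := fun h => hpr ⟨haS, h⟩
      exact hkey (a+1) a (Or.inr ⟨rfl, rfl⟩) hbS
    · exact hkey a (a+1) (Or.inl ⟨rfl, rfl⟩) haS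
  | left a b hab haS hg ih =>
    intro h1 ht
    obtain ⟨lst', hnd, hmem, hlenl, hsrc, hcov, hleg⟩ := ih (by omega) ht
    have hat : a ∈ Finset.Icc 1 t := by rw [Finset.mem_Icc]; omega
    have hat1 : a + 1 ∈ Finset.Icc 1 t := by rw [Finset.mem_Icc]; omega
    have hmem' : ∀ x ∈ lst', x ∈ Finset.Icc 1 t := by
      intro x hx
      have := hmem x hx
      rw [Finset.mem_Icc] at this ⊢
      omega
    have hfa_notC : f a ∉ C := fun h => haS ((hS a hat).mpr h)
    -- f a and f (a+1) are not generalized neighbors of vertices in [a+2, b]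
    have hfar : ∀ x ∈ lst', ∀ y, y = a ∨ y = a + 1 → y ∈ Finset.Icc 1 t →
        (y = a → f y ∉ gN (webG n k) C (f x)) ∧ (x + 1 ≠ y ∧ y + 1 ≠ x → f y ∉ gN (webG n k) C (f x)) := by
      intro x hx y hy hyt
      have hxab := Finset.mem_Icc.mp (hmem x hx)
      constructor
      · intro hya hmemy
        rw [hG (hmem' x hx) hyt] at hmemy
        rcases hmemy with hpm | ⟨heq, _⟩ <;> omega
      · intro hne hmemy
        rw [hG (hmem' x hx) hyt] at hmemy
        rcases hmemy with hpm | ⟨heq, _⟩ <;> omega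
    refine ⟨a :: (lst' ++ [a+1]), ?_, ?_, ?_, ?_, ?_, ?_⟩
    · rw [List.nodup_cons, List.nodup_append]
      refine ⟨?_, hnd, by simp, ?_⟩
      · intro hmm
        rw [List.mem_append] at hmm
        rcases hmm with h | h
        · have := Finset.mem_Icc.mp (hmem a h); omega
        · simp at h
      · intro x hx y hy hxy; rw [List.mem_singleton] at hy; subst hy; subst hxy; revert hx
        intro hmm
        have := Finset.mem_Icc.mp (hmem (a+1) hmm); omega
    · intro x hx
      simp only [List.mem_cons, List.mem_append, List.mem_singleton, List.not_mem_nil, or_false] at hx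
      rw [Finset.mem_Icc]
      rcases hx with h' | h' | h'
      · omega
      · have := Finset.mem_Icc.mp (hmem x h'); omega
      · omega
    · simp only [List.length_cons, List.length_append, List.length_singleton, List.length_nil]
      omega
    · intro v hv
      rw [mem_nUnion_map] at hv
      obtain ⟨x, hx, hv⟩ := hv
      simp only [List.mem_cons, List.mem_append, List.mem_singleton, List.not_mem_nil, or_false] at hx
      rcases hx with h' | h' | h'
      · exact ⟨x, by rw [Finset.mem_Icc]; omega, hv⟩
      · have := Finset.mem_Icc.mp (hmem x h')
        exact ⟨x, by rw [Finset.mem_Icc]; omega, hv⟩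
      · exact ⟨x, by rw [Finset.mem_Icc]; omega, hv⟩
    · intro x hx
      rw [Finset.mem_Icc] at hx
      rw [mem_nUnion_map]
      rcases (by omega : x = a ∨ x = a + 1 ∨ (a + 2 ≤ x ∧ x ≤ b)) with h' | h' | hx2
      · exact ⟨a+1, by simp, by rw [h']; exact (hG hat1 hat).mpr (Or.inl (by omega))⟩
      · exact ⟨a, by simp, by rw [h']; exact (hG hat hat1).mpr (Or.inl (by omega))⟩
      · have := hcov x (by rw [Finset.mem_Icc]; omega)
        rw [mem_nUnion_map] at this
        obtain ⟨x', hx', hv⟩ := this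
        exact ⟨x', by simp [hx'], hv⟩
    · intro X hX pre u post hdecomp
      have hXa : f a ∉ X := hX a (by rw [Finset.mem_Icc]; omega)
      have hXa1 : f (a+1) ∉ X := hX (a+1) (by rw [Finset.mem_Icc]; omega)
      rcases pre with _ | ⟨p, pre₂⟩
      · rw [List.nil_append] at hdecomp
        injection hdecomp with h1' h2'
        subst h1'
        rw [Finset.not_subset]
        refine ⟨f (a+1), (hG hat hat1).mpr (Or.inl (by omega)), ?_⟩
        simp only [Finset.mem_union, List.map_nil, nUnion_nil, Finset.notMem_empty, or_false]
        exact hXa1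
      · simp only [List.cons_append, List.cons.injEq] at hdecomp
        obtain ⟨rfl, hdecomp⟩ := hdecomp
        rcases append_singleton_decomp hdecomp with ⟨post', hpp⟩ | ⟨hpp1, hpp2, _⟩
        · -- u inside lst'
          have hstep := hleg (X ∪ gN (webG n k) C (f a)) ?_ pre₂ u post' hpp
          · rw [Finset.not_subset] at hstep ⊢
            obtain ⟨v, hv1, hv2⟩ := hstep
            refine ⟨v, hv1, ?_⟩
            simp only [List.map_cons, nUnion_cons, Finset.mem_union] at hv2 ⊢
            tauto
          · intro x hx
            rw [Finset.mem_Icc] at hx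
            simp only [Finset.mem_union]
            push_neg
            refine ⟨hX x (by rw [Finset.mem_Icc]; omega), ?_⟩
            rw [hG hat (by rw [Finset.mem_Icc]; omega)]
            push_neg
            exact ⟨by omega, fun h => absurd h (by omega)⟩
        · -- u = a + 1, pre₂ = lst'
          subst hpp1 hpp2
          rw [Finset.not_subset]
          refine ⟨f a, (hG hat1 hat).mpr (Or.inl (by omega)), ?_⟩
          simp only [List.map_cons, nUnion_cons, Finset.mem_union]
          push_neg
          refine ⟨hXa, ?_, ?_⟩
          · rw [hG hat hat]
            push_neg
            exact ⟨by omega, fun _ => haS⟩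
          · rw [mem_nUnion_map]
            rintro ⟨x, hx, hmm⟩
            have hxab := Finset.mem_Icc.mp (hmem x hx)
            rw [hG (hmem' x hx) hat] at hmm
            rcases hmm with hpm | ⟨heq, _⟩ <;> omega
  | right a b hab hbS hg ih =>
    intro h1 ht
    obtain ⟨lst', hnd, hmem, hlenl, hsrc, hcov, hleg⟩ := ih h1 (by omega)
    have hbt : b ∈ Finset.Icc 1 t := by rw [Finset.mem_Icc]; omega
    have hbt1 : b - 1 ∈ Finset.Icc 1 t := by rw [Finset.mem_Icc]; omega
    have hmem' : ∀ x ∈ lst', x ∈ Finset.Icc 1 t := by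
      intro x hx
      have := hmem x hx
      rw [Finset.mem_Icc] at this ⊢
      omega
    have hfb_notC : f b ∉ C := fun h => hbS ((hS b hbt).mpr h)
    refine ⟨b :: (lst' ++ [b-1]), ?_, ?_, ?_, ?_, ?_, ?_⟩
    · rw [List.nodup_cons, List.nodup_append]
      refine ⟨?_, hnd, by simp, ?_⟩
      · intro hmm
        rw [List.mem_append] at hmm
        rcases hmm with h | h
        · have := Finset.mem_Icc.mp (hmem b h); omega
        · simp at h; omega
      · intro x hx y hy hxy; rw [List.mem_singleton] at hy; subst hy; subst hxy; revert hx
        intro hmm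
        have := Finset.mem_Icc.mp (hmem (b-1) hmm); omega
    · intro x hx
      simp only [List.mem_cons, List.mem_append, List.mem_singleton, List.not_mem_nil, or_false] at hx
      rw [Finset.mem_Icc]
      rcases hx with h' | h' | h'
      · omega
      · have := Finset.mem_Icc.mp (hmem x h'); omega
      · omega
    · simp only [List.length_cons, List.length_append, List.length_singleton, List.length_nil]
      omega
    · intro v hv
      rw [mem_nUnion_map] at hv
      obtain ⟨x, hx, hv⟩ := hv
      simp only [List.mem_cons, List.mem_append, List.mem_singleton, List.not_mem_nil, or_false] at hx
      rcases hx with h' | h' | h'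
      · exact ⟨x, by rw [Finset.mem_Icc]; omega, hv⟩
      · have := Finset.mem_Icc.mp (hmem x h')
        exact ⟨x, by rw [Finset.mem_Icc]; omega, hv⟩
      · exact ⟨x, by rw [Finset.mem_Icc]; omega, hv⟩
    · intro x hx
      rw [Finset.mem_Icc] at hx
      rw [mem_nUnion_map]
      rcases (by omega : x = b ∨ x = b - 1 ∨ (a ≤ x ∧ x ≤ b - 2)) with h' | h' | hx2
      · exact ⟨b-1, by simp, by rw [h']; exact (hG hbt1 hbt).mpr (Or.inl (by omega))⟩
      · exact ⟨b, by simp, by rw [h']; exact (hG hbt hbt1).mpr (Or.inl (by omega))⟩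
      · have := hcov x (by rw [Finset.mem_Icc]; omega)
        rw [mem_nUnion_map] at this
        obtain ⟨x', hx', hv⟩ := this
        exact ⟨x', by simp [hx'], hv⟩
    · intro X hX pre u post hdecomp
      have hXb : f b ∉ X := hX b (by rw [Finset.mem_Icc]; omega)
      have hXb1 : f (b-1) ∉ X := hX (b-1) (by rw [Finset.mem_Icc]; omega)
      rcases pre with _ | ⟨p, pre₂⟩
      · rw [List.nil_append] at hdecomp
        injection hdecomp with h1' h2'
        subst h1'
        rw [Finset.not_subset]
        refine ⟨f (b-1), (hG hbt hbt1).mpr (Or.inl (by omega)), ?_⟩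
        simp only [Finset.mem_union, List.map_nil, nUnion_nil, Finset.notMem_empty, or_false]
        exact hXb1
      · simp only [List.cons_append, List.cons.injEq] at hdecomp
        obtain ⟨rfl, hdecomp⟩ := hdecomp
        rcases append_singleton_decomp hdecomp with ⟨post', hpp⟩ | ⟨hpp1, hpp2, _⟩
        · have hstep := hleg (X ∪ gN (webG n k) C (f b)) ?_ pre₂ u post' hpp
          · rw [Finset.not_subset] at hstep ⊢
            obtain ⟨v, hv1, hv2⟩ := hstep
            refine ⟨v, hv1, ?_⟩
            simp only [List.map_cons, nUnion_cons, Finset.mem_union] at hv2 ⊢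
            tauto
          · intro x hx
            rw [Finset.mem_Icc] at hx
            simp only [Finset.mem_union]
            push_neg
            refine ⟨hX x (by rw [Finset.mem_Icc]; omega), ?_⟩
            rw [hG hbt (by rw [Finset.mem_Icc]; omega)]
            push_neg
            exact ⟨by omega, fun h => absurd h (by omega)⟩
        · subst hpp1 hpp2
          rw [Finset.not_subset]
          refine ⟨f b, (hG hbt1 hbt).mpr (Or.inl (by omega)), ?_⟩
          simp only [List.map_cons, nUnion_cons, Finset.mem_union]
          push_neg
          refine ⟨hXb, ?_, ?_⟩
          · rw [hG hbt hbt]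
            push_neg
            exact ⟨by omega, fun _ => hbS⟩
          · rw [mem_nUnion_map]
            rintro ⟨x, hx, hmm⟩
            have hxab := Finset.mem_Icc.mp (hmem x hx)
            rw [hG (hmem' x hx) hbt] at hmm
            rcases hmm with hpm | ⟨heq, _⟩ <;> omega

end Construction

section CondToSeq

variable {n k : ℕ}

lemma cond_to_seq (hk : 1 ≤ k) (hn : 2 * (k + 1) ≤ n) (C : Set (Fin n))
    (hcond : WebPathCond n k C) :
    ∃ l : List (Fin n), IsLegal (webG n k) C l ∧ IsDom (webG n k) C l ∧
      l.length = n - 2*k + 1 := by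
  classical
  obtain ⟨i, hiC, e, hgood⟩ := hcond
  obtain ⟨t, ht⟩ : ∃ t', n - 2*k - 1 = t' := ⟨_, rfl⟩
  revert e
  rw [ht]
  intro e hgood
  have ht1 : 1 ≤ t := by omega
  set f : ℕ → Fin n := fun a =>
    if h : a ∈ Set.Icc 1 t then ((e ⟨a, h⟩ : _) : Fin n) else i with hf
  have hfval : ∀ a (h : a ∈ Set.Icc 1 t), f a = ((e ⟨a, h⟩ : _) : Fin n) := by
    intro a h
    rw [hf]
    simp only [dif_pos h]
  have hmem_st : ∀ a : ℕ, a ∈ Finset.Icc 1 t ↔ a ∈ Set.Icc 1 t := by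
    intro a; rw [Finset.mem_Icc, Set.mem_Icc]
  have hfa_prop : ∀ a (h : a ∈ Set.Icc 1 t), f a ≠ i ∧ ¬ (webG n k).Adj i (f a) := by
    intro a h
    rw [hfval a h]
    exact (e ⟨a, h⟩).2
  have hinj : ∀ a ∈ Finset.Icc 1 t, ∀ b ∈ Finset.Icc 1 t, f a = f b → a = b := by
    intro a ha b hb hfe
    rw [hmem_st] at ha hb
    rw [hfval a ha, hfval b hb] at hfe
    have h1 : e ⟨a, ha⟩ = e ⟨b, hb⟩ := Subtype.ext hfe
    have h2 := e.toEquiv.injective h1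
    exact congrArg Subtype.val h2
  have hadj : ∀ a b, a ∈ Finset.Icc 1 t → b ∈ Finset.Icc 1 t →
      ((webG n k).Adj (f a) (f b) ↔ (a + 1 = b ∨ b + 1 = a)) := by
    intro a b ha hb
    rw [hmem_st] at ha hb
    rw [hfval a ha, hfval b hb]
    exact e.map_adj_iff
  set S : Set ℕ :=
    {a : ℕ | ∃ h : a ∈ Set.Icc 1 t, ((e ⟨a, h⟩ : _) : Fin n) ∈ C} with hSdef
  have hSmem : ∀ a ∈ Finset.Icc 1 t, (a ∈ S ↔ f a ∈ C) := by
    intro a ha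
    rw [hmem_st] at ha
    constructor
    · rintro ⟨h, hC⟩
      rw [hfval a h]
      exact hC
    · intro hC
      exact ⟨ha, by rw [← hfval a ha]; exact hC⟩
  obtain ⟨lst, hnd, hmemIcc, hlenlst, hsrc, hcov, hleg⟩ :=
    seq_exists C f S t hinj hadj hSmem 1 t hgood (le_refl 1) (le_refl t)
  have hnn : 0 < n := by omega
  -- the closing vertex
  have hxadj : (webG n k).Adj (rot i 1) i := by
    have h := (adj_rot hk hn i (show 1 < n by omega) (show 0 < n by omega)).mpr
      ⟨by omega, by left; simp [Nat.dist]; omega⟩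
    rwa [rot_zero] at h
  have hxne : rot i 1 ≠ i := by
    intro hxx
    have := (rot_eq_self_iff hk hn i (show (1:ℕ) < n by omega)).mp hxx
    omega
  have hi_gNi : i ∉ gN (webG n k) C i := by
    rw [mem_gN]
    rintro (h | ⟨_, h⟩)
    · exact (webG n k).loopless.irrefl i h
    · exact hiC h
  have hi_gNf : ∀ a ∈ Finset.Icc 1 t, i ∉ gN (webG n k) C (f a) := by
    intro a ha
    rw [mem_gN]
    rintro (h | ⟨heq, _⟩)
    · exact (hfa_prop a ((hmem_st a).mp ha)).2 h.symm
    · exact (hfa_prop a ((hmem_st a).mp ha)).1 heq.symm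
  have hfa_gNi : ∀ a ∈ Finset.Icc 1 t, f a ∉ gN (webG n k) C i := by
    intro a ha
    rw [mem_gN]
    rintro (h | ⟨heq, _⟩)
    · exact (hfa_prop a ((hmem_st a).mp ha)).2 h
    · exact (hfa_prop a ((hmem_st a).mp ha)).1 heq
  set M : List (Fin n) := lst.map f with hM
  have hMlen : M.length = t := by
    rw [hM, List.length_map, hlenlst]
    omega
  have hMmem : ∀ v ∈ M, ∃ a ∈ Finset.Icc 1 t, f a = v := by
    intro v hv
    rw [hM, List.mem_map] at hv
    obtain ⟨a, ha, rfl⟩ := hv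
    exact ⟨a, hmemIcc a ha, rfl⟩
  refine ⟨i :: (M ++ [rot i 1]), ⟨?_, ?_⟩, ?_, ?_⟩
  · -- nodup
    rw [List.nodup_cons, List.nodup_append]
    refine ⟨?_, ?_, by simp, ?_⟩
    · rw [List.mem_append]
      rintro (h | h)
      · obtain ⟨a, ha, hfa⟩ := hMmem i h
        exact (hfa_prop a ((hmem_st a).mp ha)).1 hfa
      · rw [List.mem_singleton] at h
        exact hxne h.symm
    · rw [hM]
      exact List.Nodup.map_on
        (fun x hx y hy => hinj x (hmemIcc x hx) y (hmemIcc y hy)) hnd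
    · intro x hx y hy hxy; rw [List.mem_singleton] at hy; subst hy; subst hxy; revert hx
      intro hmm
      obtain ⟨a, ha, hfa⟩ := hMmem (rot i 1) hmm
      exact (hfa_prop a ((hmem_st a).mp ha)).2 (hfa ▸ hxadj.symm)
  · -- legality indices
    intro j hj h0j
    obtain ⟨j', rfl⟩ : ∃ j', j = j' + 1 := ⟨j - 1, by omega⟩
    rw [List.get_eq_getElem]
    have hjlen : j' < (M ++ [rot i 1]).length := by
      simp only [List.length_cons] at hj
      omega
    have hgetj : (i :: (M ++ [rot i 1]))[j'+1] = (M ++ [rot i 1])[j'] := by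
      simp
    have htakej : (i :: (M ++ [rot i 1])).take (j'+1) = i :: (M ++ [rot i 1]).take j' := by
      rw [List.take_succ_cons]
    rw [hgetj, htakej, nUnion_cons]
    rcases Nat.lt_or_ge j' M.length with hlt | hge
    · -- inside the path part
      have hget2 : (M ++ [rot i 1])[j'] = M[j'] := List.getElem_append_left hlt
      have htake2 : (M ++ [rot i 1]).take j' = M.take j' :=
        List.take_append_of_le_length (by omega)
      have hlt' : j' < lst.length := by rw [hM, List.length_map] at hlt; exact hlt
      have hgetM : M[j'] = f (lst[j']'hlt') := by
        simp [hM]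
      have htakeM : M.take j' = (lst.take j').map f := by
        simp [hM, List.map_take]
      have hdec : lst = lst.take j' ++ (lst[j'] :: lst.drop (j'+1)) := by
        conv_lhs => rw [← List.take_append_drop j' lst]
        rw [List.drop_eq_getElem_cons hlt']
      have hs := hleg (gN (webG n k) C i) (fun a ha => hfa_gNi a ha)
        (lst.take j') (lst[j']) (lst.drop (j'+1)) hdec
      rw [hget2, hgetM, htake2, htakeM]
      exact hs
    · -- the closing vertex
      have hj'eq : j' = M.length := by
        simp only [List.length_append, List.length_singleton] at hjlen
        omega
      subst hj'eq
      have hget2 : (M ++ [rot i 1])[M.length] = rot i 1 :=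
        List.getElem_concat_length rfl _
      have htake2 : (M ++ [rot i 1]).take M.length = M :=
        by rw [List.take_append_of_le_length (le_refl _), List.take_length]
      rw [hget2, htake2, Finset.not_subset]
      refine ⟨i, ?_, ?_⟩
      · rw [mem_gN]
        exact Or.inl hxadj
      · rw [Finset.mem_union]
        push_neg
        refine ⟨hi_gNi, ?_⟩
        rw [hM, mem_nUnion_map]
        rintro ⟨a, ha, hmm⟩
        exact hi_gNf a (hmemIcc a ha) hmm
  · -- domination
    rw [IsDom, Finset.eq_univ_iff_forall]
    intro v
    obtain ⟨s, hs, rfl⟩ := rot_surj i v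
    rw [nUnion_cons, nUnion_append, nUnion_singleton, Finset.mem_union, Finset.mem_union]
    rcases (by omega : s = 0 ∨ ((1 ≤ s ∧ s ≤ k) ∨ (n-k ≤ s ∧ s ≤ n-1)) ∨
        (k+1 ≤ s ∧ s ≤ n-k-1)) with h' | h' | h'
    · right; right
      subst h'
      rw [rot_zero, mem_gN]
      exact Or.inl hxadj
    · left
      rw [mem_gN_web_iff hk hn C i hs, mem_webD]
      exact Or.inl h'
    · right; left
      -- v is in the induced path: use surjectivity of e
      have hvA : rot i s ≠ i ∧ ¬ (webG n k).Adj i (rot i s) := by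
        constructor
        · intro hxx
          have := (rot_eq_self_iff hk hn i hs).mp hxx
          omega
        · intro hadj'
          have h2 : (webG n k).Adj (rot i 0) (rot i s) := by rwa [rot_zero]
          have := (adj_rot hk hn i (show 0 < n by omega) hs).mp h2
          simp only [Nat.dist_zero_left] at this
          omega
      set w : ↥{v : Fin n | v ≠ i ∧ ¬ (webG n k).Adj i v} := ⟨rot i s, hvA⟩ with hw
      set aa := e.symm w with haa
      have hae : e aa = w := e.apply_symm_apply w
      have haamem : (aa : ℕ) ∈ Set.Icc 1 t := aa.2
      have hfaa : f (aa : ℕ) = rot i s := by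
        rw [hfval _ haamem]
        have : (⟨(aa : ℕ), haamem⟩ : ↥(Set.Icc 1 t)) = aa := Subtype.ext rfl
        rw [this, hae]
      have := hcov (aa : ℕ) (by rw [hmem_st]; exact haamem)
      rw [← hfaa]
      exact this
  · -- length
    simp only [List.length_cons, List.length_append, List.length_singleton, List.length_nil]
    rw [hMlen]
    omega

end CondToSeq

section MainLemma

variable {n k : ℕ}

lemma ML (hk : 1 ≤ k) (hn : 2 * (k + 1) ≤ n) (hk1 : k = 1) (C : Set (Fin n))
    (l : List (Fin n)) (i : Fin n)
    (hsteps : ∀ j (_ : 1 ≤ j) (hj2 : j < l.length),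
      ∃ w, gN (webG n k) C (l[j]'hj2) ∩
          (Finset.univ \ nUnion (webG n k) C (l.take j)) = {w} ∧
        Finset.univ \ nUnion (webG n k) C (l.take (j+1)) =
          (Finset.univ \ nUnion (webG n k) C (l.take j)).erase w)
    (hWL : Finset.univ \ nUnion (webG n k) C (l.take l.length) = ∅) :
    ∀ N j c d, l.length - j ≤ N → 1 ≤ j → j ≤ l.length → c ≤ d → c % 2 = 1 →
    d + 3 ≤ n → (n - d) % 2 = 1 →
    (∀ s, s < n → (rot i s ∈ Finset.univ \ nUnion (webG n k) C (l.take j) ↔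
      ((s % 2 = 0 ∧ s < c) ∨ (c+1 ≤ s ∧ s ≤ d+1) ∨
        (d+1 < s ∧ s < n ∧ (n - s) % 2 = 0)))) →
    (∀ s, s < n → ((s % 2 = 0 ∧ s < c) ∨ (d+1 < s ∧ s < n ∧ (n - s) % 2 = 0)) →
      rot i s ∉ C) →
    GoodConf {a : ℕ | rot i (a+1) ∈ C} c d := by
  intro N
  induction N with
  | zero =>
    intro j c d hfuel h1 hjle hcd hcodd hd3 hnd hW hC
    have hj : j = l.length := by omega
    have hcW := (hW (c+1) (by omega)).mpr (by omega)
    rw [hj, hWL] at hcW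
    exact absurd hcW (Finset.notMem_empty _)
  | succ N ih =>
    intro j c d hfuel h1 hjle hcd hcodd hd3 hnd hW hC
    have hjlt : j < l.length := by
      rcases Nat.lt_or_ge j l.length with h | h
      · exact h
      · exfalso
        have hj : j = l.length := by omega
        have hcW := (hW (c+1) (by omega)).mpr (by omega)
        rw [hj, hWL] at hcW
        exact absurd hcW (Finset.notMem_empty _)
    obtain ⟨w, hsing, herase⟩ := hsteps j h1 hjlt
    obtain ⟨s, hs, hueq⟩ := rot_surj i (l[j]'hjlt)
    obtain ⟨sw, hswlt, hweq⟩ := rot_surj i w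
    have hwin : w ∈ gN (webG n k) C (l[j]'hjlt) ∧
        w ∈ Finset.univ \ nUnion (webG n k) C (l.take j) := by
      have h' : w ∈ gN (webG n k) C (l[j]'hjlt) ∩
          (Finset.univ \ nUnion (webG n k) C (l.take j)) := by
        rw [hsing]; exact Finset.mem_singleton_self w
      exact Finset.mem_inter.mp h'
    have huniq : ∀ x, x ∈ gN (webG n k) C (l[j]'hjlt) →
        x ∈ Finset.univ \ nUnion (webG n k) C (l.take j) → x = w := by
      intro x hx1 hx2
      have h' : x ∈ gN (webG n k) C (l[j]'hjlt) ∩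
          (Finset.univ \ nUnion (webG n k) C (l.take j)) := Finset.mem_inter.mpr ⟨hx1, hx2⟩
      rw [hsing] at h'
      exact Finset.mem_singleton.mp h'
    have hwmem : (sw % 2 = 0 ∧ sw < c) ∨ (c+1 ≤ sw ∧ sw ≤ d+1) ∨
        (d+1 < sw ∧ sw < n ∧ (n - sw) % 2 = 0) := by
      rw [← hW sw hswlt, ← hweq]
      exact hwin.2
    have hwadj : (sw = s ∧ rot i s ∈ C) ∨
        (s ≠ sw ∧ ((s - sw) + (sw - s) ≤ k ∨ n - k ≤ (s - sw) + (sw - s))) := by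
      rw [← mem_gN_web_rot hk hn C i hs hswlt, ← hueq, ← hweq]
      exact hwin.1
    have htool : ∀ s2, s2 < n →
        ((s2 = s ∧ rot i s ∈ C) ∨
          (s ≠ s2 ∧ ((s - s2) + (s2 - s) ≤ k ∨ n - k ≤ (s - s2) + (s2 - s)))) →
        ((s2 % 2 = 0 ∧ s2 < c) ∨ (c+1 ≤ s2 ∧ s2 ≤ d+1) ∨
          (d+1 < s2 ∧ s2 < n ∧ (n - s2) % 2 = 0)) →
        s2 = sw := by
      intro s2 hs2 hadj2 hmem2
      have h1' : rot i s2 ∈ gN (webG n k) C (l[j]'hjlt) := by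
        rw [hueq]
        exact (mem_gN_web_rot hk hn C i hs hs2).mpr hadj2
      have h2' : rot i s2 ∈ Finset.univ \ nUnion (webG n k) C (l.take j) :=
        (hW s2 hs2).mpr hmem2
      have h3' := huniq _ h1' h2'
      rw [hweq] at h3'
      exact (rot_inj i hs2 hswlt).mp h3'
    have hWnext : ∀ s', s' < n →
        (rot i s' ∈ Finset.univ \ nUnion (webG n k) C (l.take (j+1)) ↔
          (rot i s' ∈ Finset.univ \ nUnion (webG n k) C (l.take j) ∧ s' ≠ sw)) := by
      intro s' hs'
      rw [herase, Finset.mem_erase, hweq]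
      constructor
      · rintro ⟨hne', hmm⟩
        exact ⟨hmm, fun h => hne' (by rw [h])⟩
      · rintro ⟨hmm, hne'⟩
        exact ⟨fun h => hne' ((rot_inj i hs' hswlt).mp h), hmm⟩
    rcases hwadj with ⟨hswse, huC⟩ | ⟨hne, hdist⟩
    · -- CASE A : w = u itself, u ∈ C
      subst hswse
      have hguard : ¬((sw % 2 = 0 ∧ sw < c) ∨ (d+1 < sw ∧ sw < n ∧ (n - sw) % 2 = 0)) :=
        fun hg => hC sw hswlt hg huC
      have hsmid : c + 1 ≤ sw ∧ sw ≤ d + 1 := by omega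
      have hnsp : ¬(((sw+1) % 2 = 0 ∧ sw+1 < c) ∨ (c+1 ≤ sw+1 ∧ sw+1 ≤ d+1) ∨
          (d+1 < sw+1 ∧ sw+1 < n ∧ (n - (sw+1)) % 2 = 0)) := by
        intro hmm
        have := htool (sw+1) (by omega) (Or.inr ⟨by omega, by omega⟩) hmm
        omega
      have hnsm : ¬(((sw-1) % 2 = 0 ∧ sw-1 < c) ∨ (c+1 ≤ sw-1 ∧ sw-1 ≤ d+1) ∨
          (d+1 < sw-1 ∧ sw-1 < n ∧ (n - (sw-1)) % 2 = 0)) := by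
        intro hmm
        have := htool (sw-1) (by omega) (Or.inr ⟨by omega, by omega⟩) hmm
        omega
      have hcset : rot i (c+1) ∈ C := by
        rw [show c+1 = sw by omega]
        exact huC
      rw [show d = c by omega]
      exact GoodConf.single c hcset
    · -- CASE B : w is a true neighbor of u
      have hnC2 : ¬(rot i s ∈ C ∧ (c+1 ≤ s ∧ s ≤ d+1)) := by
        rintro ⟨hc2, hm2⟩
        have := htool s hs (Or.inl ⟨rfl, hc2⟩) (Or.inr (Or.inl hm2))
        omega
      rcases (by omega : sw = s + 1 ∨ s = sw + 1 ∨ (s = 0 ∧ sw = n - 1) ∨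
          (sw = 0 ∧ s = n - 1)) with hc1 | hc2 | ⟨hc3a, hc3b⟩ | ⟨hc4a, hc4b⟩
      · -- B1 : u = w - 1  (sw = s + 1)
        rcases Nat.eq_zero_or_pos s with hs0 | hspos
        · exfalso
          omega
        · have hns2 : ¬(((s-1) % 2 = 0 ∧ s-1 < c) ∨ (c+1 ≤ s-1 ∧ s-1 ≤ d+1) ∨
              (d+1 < s-1 ∧ s-1 < n ∧ (n - (s-1)) % 2 = 0)) := by
            intro hmm
            have := htool (s-1) (by omega) (Or.inr ⟨by omega, by omega⟩) hmm
            omega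
          have hout : s = c+1 ∧ sw = c+2 ∧ c+1 ≤ d := by omega
          have huNotC : rot i (c+1) ∉ C := by
            rw [show c+1 = s by omega]
            intro hcc
            exact hnC2 ⟨hcc, by omega⟩
          rcases (by omega : d = c + 1 ∨ c + 2 ≤ d) with hd | hd
          · subst hd
            exact GoodConf.pair c (fun hpp => huNotC hpp.1)
          · refine GoodConf.left c d hd huNotC ?_
            refine ih (j+1) (c+2) d (by omega) (by omega) (by omega) (by omega)
              (by omega) (by omega) (by omega) ?_ ?_
            · intro s' hs'
              rw [hWnext s' hs', hW s' hs']
              omega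
            · intro s' hs' hg'
              rcases (by omega : s' = c+1 ∨ ((s' % 2 = 0 ∧ s' < c) ∨
                  (d+1 < s' ∧ s' < n ∧ (n - s') % 2 = 0))) with h' | h'
              · rw [h']
                exact huNotC
              · exact hC s' hs' h'
      · -- B2 : u = w + 1  (s = sw + 1)
        rcases (by omega : s + 1 = n ∨ s + 1 < n) with hsn | hsn
        · exfalso
          have := htool 0 (by omega) (Or.inr ⟨by omega, by omega⟩) (by omega)
          omega
        · have hns2 : ¬(((s+1) % 2 = 0 ∧ s+1 < c) ∨ (c+1 ≤ s+1 ∧ s+1 ≤ d+1) ∨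
              (d+1 < s+1 ∧ s+1 < n ∧ (n - (s+1)) % 2 = 0)) := by
            intro hmm
            have := htool (s+1) (by omega) (Or.inr ⟨by omega, by omega⟩) hmm
            omega
          have hout : s = d+1 ∧ sw = d ∧ c+1 ≤ d := by omega
          have hdNotC : rot i (d+1) ∉ C := by
            rw [show d+1 = s by omega]
            intro hcc
            exact hnC2 ⟨hcc, by omega⟩
          rcases (by omega : d = c + 1 ∨ c + 2 ≤ d) with hd | hd
          · subst hd
            exact GoodConf.pair c (fun hpp => hdNotC hpp.2)
          · refine GoodConf.right c d hd hdNotC ?_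
            refine ih (j+1) c (d-2) (by omega) (by omega) (by omega) (by omega)
              (by omega) (by omega) (by omega) ?_ ?_
            · intro s' hs'
              rw [hWnext s' hs', hW s' hs']
              omega
            · intro s' hs' hg'
              rcases (by omega : s' = d+1 ∨ ((s' % 2 = 0 ∧ s' < c) ∨
                  (d+1 < s' ∧ s' < n ∧ (n - s') % 2 = 0))) with h' | h'
              · rw [h']
                exact hdNotC
              · exact hC s' hs' h'
      · -- wrap case s = 0, sw = n-1 : impossible
        exfalso
        omega
      · -- wrap case sw = 0, s = n-1 : impossible
        exfalso
        have := htool (n-2) (by omega) (Or.inr ⟨by omega, by omega⟩) (by omega)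
        omega

end MainLemma

section CanonicalIso

variable {n k : ℕ}

lemma canonical_iso (hk : 1 ≤ k) (hn : 2 * (k + 1) ≤ n) (i : Fin n)
    (hpath : k = 1 ∨ n - 2*k - 1 ≤ 2) :
    ∃ e : pathG (n - 2 * k - 1) ≃g
        ((webG n k).induce {v : Fin n | v ≠ i ∧ ¬ (webG n k).Adj i v}),
      ∀ a (h : a ∈ Set.Icc 1 (n - 2 * k - 1)),
        ((e ⟨a, h⟩ : _) : Fin n) = rot i (k + a) := by
  classical
  have hnn : 0 < n := by omega
  have hdd : ∀ x y : ℕ, Nat.dist x y = (x - y) + (y - x) := fun _ _ => rfl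
  have hto : ∀ a : ↥(Set.Icc 1 (n - 2*k - 1)),
      rot i (k + a.1) ∈ {v : Fin n | v ≠ i ∧ ¬ (webG n k).Adj i v} := by
    intro a
    have ha := Set.mem_Icc.mp a.2
    constructor
    · intro hxx
      have := (rot_eq_self_iff hk hn i (show k + a.1 < n by omega)).mp hxx
      omega
    · intro hadj
      have h2 : (webG n k).Adj (rot i 0) (rot i (k + a.1)) := by rwa [rot_zero]
      have h3 := (adj_rot hk hn i hnn (show k + a.1 < n by omega)).mp h2
      rw [hdd] at h3
      omega
  have hrange : ∀ v : ↥{v : Fin n | v ≠ i ∧ ¬ (webG n k).Adj i v},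
      k + 1 ≤ (v.1.1 + n - i.1) % n ∧ (v.1.1 + n - i.1) % n ≤ n - k - 1 := by
    intro v
    set s := (v.1.1 + n - i.1) % n with hsdef
    have hsn : s < n := Nat.mod_lt _ i.pos
    have hvs : rot i s = v.1 := rot_off i v.1
    rcases (by omega : s = 0 ∨ (1 ≤ s ∧ s ≤ k) ∨ (n - k ≤ s ∧ s ≤ n-1) ∨
        (k+1 ≤ s ∧ s ≤ n-k-1)) with h' | h' | h' | h'
    · exfalso
      apply v.2.1
      rw [← hvs, h', rot_zero]
    · exfalso
      apply v.2.2
      have h2 : (webG n k).Adj (rot i 0) (rot i s) := by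
        rw [adj_rot hk hn i hnn hsn]
        refine ⟨by omega, by left; rw [hdd]; omega⟩
      rwa [rot_zero, hvs] at h2
    · exfalso
      apply v.2.2
      have h2 : (webG n k).Adj (rot i 0) (rot i s) := by
        rw [adj_rot hk hn i hnn hsn]
        refine ⟨by omega, by right; rw [hdd]; omega⟩
      rwa [rot_zero, hvs] at h2
    · exact h'
  have hinv : ∀ v : ↥{v : Fin n | v ≠ i ∧ ¬ (webG n k).Adj i v},
      (v.1.1 + n - i.1) % n - k ∈ Set.Icc 1 (n - 2*k - 1) := by
    intro v
    have := hrange v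
    rw [Set.mem_Icc]
    omega
  refine ⟨⟨⟨fun a => ⟨rot i (k + a.1), hto a⟩,
    fun v => ⟨(v.1.1 + n - i.1) % n - k, hinv v⟩, ?_, ?_⟩, ?_⟩, ?_⟩
  · -- left inverse
    intro a
    have ha := Set.mem_Icc.mp a.2
    apply Subtype.ext
    show ((rot i (k + a.1)).1 + n - i.1) % n - k = a.1
    rw [off_rot i (show k + a.1 < n by omega)]
    omega
  · -- right inverse
    intro v
    have := hrange v
    apply Subtype.ext
    show rot i (k + ((v.1.1 + n - i.1) % n - k)) = v.1
    rw [show k + ((v.1.1 + n - i.1) % n - k) = (v.1.1 + n - i.1) % n by omega]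
    exact rot_off i v.1
  · -- adjacency
    intro a b
    have ha := Set.mem_Icc.mp a.2
    have hb := Set.mem_Icc.mp b.2
    show (webG n k).Adj (rot i (k + a.1)) (rot i (k + b.1)) ↔ _
    rw [adj_rot hk hn i (show k + a.1 < n by omega) (show k + b.1 < n by omega)]
    show _ ↔ ((a : ℕ) + 1 = (b : ℕ) ∨ (b : ℕ) + 1 = (a : ℕ))
    rw [hdd]
    omega
  · -- coercion values
    intro a h
    rfl

end CanonicalIso

section SeqToCond

lemma goodconf_congr {C C' : Set ℕ} {a b : ℕ} (h : GoodConf C a b)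
    (hcc : ∀ x, a ≤ x → x ≤ b → (x ∈ C ↔ x ∈ C')) : GoodConf C' a b := by
  induction h with
  | single a ha => exact GoodConf.single a ((hcc a le_rfl le_rfl).mp ha)
  | pair a hpr =>
    exact GoodConf.pair a (fun h' => hpr ⟨(hcc a (by omega) (by omega)).mpr h'.1,
      (hcc (a+1) (by omega) (by omega)).mpr h'.2⟩)
  | left a b hab ha hg ihg =>
    exact GoodConf.left a b hab (fun hmm => ha ((hcc a le_rfl (by omega)).mpr hmm))
      (ihg (fun x h1 h2 => hcc x (by omega) h2))
  | right a b hab hb hg ihg =>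
    exact GoodConf.right a b hab (fun hmm => hb ((hcc b (by omega) le_rfl).mpr hmm))
      (ihg (fun x h1 h2 => hcc x h1 (by omega)))

variable {n k : ℕ}

lemma seq_to_cond (hk : 1 ≤ k) (hn : 2 * (k + 1) ≤ n) (C : Set (Fin n))
    {l : List (Fin n)} (hleg : IsLegal (webG n k) C l) (hdom : IsDom (webG n k) C l)
    (hlen : l.length = n - 2*k + 1) : WebPathCond n k C := by
  classical
  have h0 : 0 < l.length := by omega
  obtain ⟨hiC, hsteps⟩ := exact_facts hk hn C hleg hdom hlen h0
  have hW1 := W1_char hk hn C h0 hiC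
  have hWL := W_final hk hn C hdom
  set i := l[0]'h0 with hidef
  -- first step data
  have h1lt : 1 < l.length := by omega
  obtain ⟨w, hsing, _⟩ := hsteps 1 (le_refl 1) h1lt
  obtain ⟨s, hs, hueq⟩ := rot_surj i (l[1]'h1lt)
  obtain ⟨sw, hswlt, hweq⟩ := rot_surj i w
  have hwin : w ∈ gN (webG n k) C (l[1]'h1lt) ∧
      w ∈ Finset.univ \ nUnion (webG n k) C (l.take 1) := by
    have h' : w ∈ gN (webG n k) C (l[1]'h1lt) ∩
        (Finset.univ \ nUnion (webG n k) C (l.take 1)) := by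
      rw [hsing]; exact Finset.mem_singleton_self w
    exact Finset.mem_inter.mp h'
  have huniq : ∀ x, x ∈ gN (webG n k) C (l[1]'h1lt) →
      x ∈ Finset.univ \ nUnion (webG n k) C (l.take 1) → x = w := by
    intro x hx1 hx2
    have h' : x ∈ gN (webG n k) C (l[1]'h1lt) ∩
        (Finset.univ \ nUnion (webG n k) C (l.take 1)) := Finset.mem_inter.mpr ⟨hx1, hx2⟩
    rw [hsing] at h'
    exact Finset.mem_singleton.mp h'
  have hwmem : sw = 0 ∨ (k+1 ≤ sw ∧ sw ≤ n-k-1) := by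
    rw [← hW1 sw hswlt, ← hweq]
    exact hwin.2
  have hwadj : (sw = s ∧ rot i s ∈ C) ∨
      (s ≠ sw ∧ ((s - sw) + (sw - s) ≤ k ∨ n - k ≤ (s - sw) + (sw - s))) := by
    rw [← mem_gN_web_rot hk hn C i hs hswlt, ← hueq, ← hweq]
    exact hwin.1
  have htool : ∀ s2, s2 < n →
      ((s2 = s ∧ rot i s ∈ C) ∨
        (s ≠ s2 ∧ ((s - s2) + (s2 - s) ≤ k ∨ n - k ≤ (s - s2) + (s2 - s)))) →
      (s2 = 0 ∨ (k+1 ≤ s2 ∧ s2 ≤ n-k-1)) →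
      s2 = sw := by
    intro s2 hs2 hadj2 hmem2
    have h1' : rot i s2 ∈ gN (webG n k) C (l[1]'h1lt) := by
      rw [hueq]
      exact (mem_gN_web_rot hk hn C i hs hs2).mpr hadj2
    have h2' : rot i s2 ∈ Finset.univ \ nUnion (webG n k) C (l.take 1) :=
      (hW1 s2 hs2).mpr hmem2
    have h3' := huniq _ h1' h2'
    rw [hweq] at h3'
    exact (rot_inj i hs2 hswlt).mp h3'
  -- determine the path condition
  have hpath : k = 1 ∨ n - 2*k - 1 ≤ 2 := by
    by_cases hk1 : k = 1
    · exact Or.inl hk1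
    · right
      have hk2 : 2 ≤ k := by omega
      by_contra hT3
      push_neg at hT3
      rcases (by omega : s = 0 ∨ (1 ≤ s ∧ s ≤ k) ∨ s = k+1 ∨ (k+2 ≤ s ∧ s ≤ n-k-2) ∨
          s = n-k-1 ∨ (n-k ≤ s ∧ s ≤ n-1)) with h' | h' | h' | h' | h' | h'
      · rcases hwadj with ⟨h1', h2'⟩ | ⟨h1', h2'⟩
        · apply hiC
          have : rot i 0 = i := rot_zero i
          rw [← this, ← h']
          exact h2'
        · omega
      · have hA := htool 0 (by omega) (Or.inr (by omega)) (by omega)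
        have hB := htool (k+1) (by omega) (Or.inr (by omega)) (by omega)
        omega
      · have hA := htool (k+2) (by omega) (Or.inr (by omega)) (by omega)
        have hB := htool (k+3) (by omega) (Or.inr (by omega)) (by omega)
        omega
      · have hA := htool (s-1) (by omega) (Or.inr (by omega)) (by omega)
        have hB := htool (s+1) (by omega) (Or.inr (by omega)) (by omega)
        omega
      · have hA := htool (n-k-2) (by omega) (Or.inr (by omega)) (by omega)
        have hB := htool (n-k-3) (by omega) (Or.inr (by omega)) (by omega)
        omega
      · have hA := htool 0 (by omega) (Or.inr (by omega)) (by omega)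
        have hB := htool (n-k-1) (by omega) (Or.inr (by omega)) (by omega)
        omega
  obtain ⟨e, hecoe⟩ := canonical_iso hk hn i hpath
  refine ⟨i, hiC, e, ?_⟩
  suffices hgc : GoodConf {a : ℕ | rot i (k + a) ∈ C} 1 (n - 2*k - 1) by
    refine goodconf_congr hgc ?_
    intro x h1 h2
    simp only [Set.mem_setOf_eq]
    constructor
    · intro hxc
      have hxm : x ∈ Set.Icc 1 (n - 2*k - 1) := Set.mem_Icc.mpr ⟨h1, h2⟩
      exact ⟨hxm, by rw [hecoe x hxm]; exact hxc⟩
    · rintro ⟨h', hc⟩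
      rw [hecoe x h'] at hc
      exact hc
  by_cases hk1 : k = 1
  · -- cycle: use the main lemma
    have hml := ML hk hn hk1 C l i hsteps hWL l.length 1 1 (n-3) (by omega)
      (le_refl 1) (by omega) (by omega) (by omega) (by omega) (by omega)
      ?_ ?_
    · rw [show n - 2*k - 1 = n - 3 by omega]
      refine goodconf_congr hml ?_
      intro x _ _
      simp only [Set.mem_setOf_eq]
      rw [show k + x = x + 1 by omega]
    · intro s' hs'
      rw [hW1 s' hs']
      omega
    · intro s' hs' hg'
      have hs0 : s' = 0 := by omega
      rw [hs0, rot_zero]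
      exact hiC
  · have hk2 : 2 ≤ k := by omega
    rcases (by omega : n - 2*k - 1 = 1 ∨ n - 2*k - 1 = 2) with ht1 | ht2
    · -- t = 1
      have hkey : rot i (k+1) ∈ C := by
        rcases hwadj with ⟨hsweq, huC⟩ | ⟨hne, hdist⟩
        · rcases (by omega : s = 0 ∨ s = k+1) with h' | h'
          · exfalso
            apply hiC
            have h2 : rot i 0 = i := rot_zero i
            rw [← h2, ← h']
            exact huC
          · rw [← h']
            exact huC
        · exfalso
          rcases (by omega : sw = 0 ∨ sw = k+1) with h' | h'
          · rcases (by omega : (1 ≤ s ∧ s ≤ k) ∨ (n-k ≤ s ∧ s ≤ n-1)) with h2 | h2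
            · have := htool (k+1) (by omega) (Or.inr (by omega)) (by omega)
              omega
            · have := htool (k+1) (by omega) (Or.inr (by omega)) (by omega)
              omega
          · rcases (by omega : (1 ≤ s ∧ s ≤ k) ∨ (k+2 ≤ s ∧ s ≤ n-1)) with h2 | h2
            · have := htool 0 (by omega) (Or.inr (by omega)) (by omega)
              omega
            · have := htool 0 (by omega) (Or.inr (by omega)) (by omega)
              omega
      rw [ht1]
      exact GoodConf.single 1 hkey
    · -- t = 2
      have hkey : ¬(rot i (k+1) ∈ C ∧ rot i (k+2) ∈ C) := by
        rintro ⟨hC1, hC2⟩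
        rcases hwadj with ⟨hsweq, huC⟩ | ⟨hne, hdist⟩
        · rcases (by omega : s = 0 ∨ s = k+1 ∨ s = k+2) with h' | h' | h'
          · apply hiC
            have h2 : rot i 0 = i := rot_zero i
            rw [← h2, ← h']
            exact huC
          · have := htool (k+2) (by omega) (Or.inr (by omega)) (by omega)
            omega
          · have := htool (k+1) (by omega) (Or.inr (by omega)) (by omega)
            omega
        · rcases (by omega : sw = 0 ∨ sw = k+1 ∨ sw = k+2) with h' | h' | h'
          · rcases (by omega : (1 ≤ s ∧ s ≤ k) ∨ (k+3 ≤ s ∧ s ≤ n-1)) with h2 | h2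
            · have := htool (k+1) (by omega) (Or.inr (by omega)) (by omega)
              omega
            · have := htool (k+2) (by omega) (Or.inr (by omega)) (by omega)
              omega
          · rcases (by omega : (1 ≤ s ∧ s ≤ k) ∨ s = k+2 ∨ (k+3 ≤ s ∧ s ≤ n-1)) with h2 | h2 | h2
            · have := htool 0 (by omega) (Or.inr (by omega)) (by omega)
              omega
            · have := htool s hs (Or.inl ⟨rfl, by rw [h2]; exact hC2⟩) (by omega)
              omega
            · have := htool 0 (by omega) (Or.inr (by omega)) (by omega)
              omega
          · rcases (by omega : (1 ≤ s ∧ s ≤ k) ∨ s = k+1 ∨ (k+3 ≤ s ∧ s ≤ n-1)) with h2 | h2 | h2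
            · have := htool 0 (by omega) (Or.inr (by omega)) (by omega)
              omega
            · have := htool s hs (Or.inl ⟨rfl, by rw [h2]; exact hC1⟩) (by omega)
              omega
            · have := htool 0 (by omega) (Or.inr (by omega)) (by omega)
              omega
      rw [ht2, show (2:ℕ) = 1 + 1 from rfl]
      exact GoodConf.pair 1 hkey

end SeqToCond

section Final

variable {n k : ℕ}

lemma grundy_set_facts (hk : 1 ≤ k) (hn : 2 * (k + 1) ≤ n) (C : Set (Fin n)) :
    ∀ x ∈ {m : ℕ | ∃ l : List (Fin n), IsLegal (webG n k) C l ∧ IsDom (webG n k) C l ∧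
      l.length = m}, x ≤ n - 2*k + 1 := by
  rintro x ⟨l, hleg, hdom, hlen⟩
  have hpos : 0 < l.length := by
    rcases Nat.eq_zero_or_pos l.length with h | h
    · exfalso
      have hl : l = [] := List.length_eq_zero_iff.mp h
      rw [IsDom, hl, nUnion_nil] at hdom
      have := Finset.mem_univ (⟨0, by omega⟩ : Fin n)
      rw [← hdom] at this
      exact absurd this (Finset.notMem_empty _)
    · exact h
  have hup := legal_card_upper (webG n k) C hleg (l.length - 1) 1 (by omega) (le_refl 1)
  rw [Fintype.card_fin, nUnion_take_one _ _ hpos] at hup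
  have hge := card_gN_web_ge hk hn C (l[0]'hpos)
  omega

lemma grundy_set_facts_univ (hk : 1 ≤ k) (hn : 2 * (k + 1) ≤ n) (C : Set (Fin n))
    (hC : C = Set.univ) :
    ∀ x ∈ {m : ℕ | ∃ l : List (Fin n), IsLegal (webG n k) C l ∧ IsDom (webG n k) C l ∧
      l.length = m}, x ≤ n - 2*k := by
  rintro x ⟨l, hleg, hdom, hlen⟩
  have hpos : 0 < l.length := by
    rcases Nat.eq_zero_or_pos l.length with h | h
    · exfalso
      have hl : l = [] := List.length_eq_zero_iff.mp h
      rw [IsDom, hl, nUnion_nil] at hdom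
      have := Finset.mem_univ (⟨0, by omega⟩ : Fin n)
      rw [← hdom] at this
      exact absurd this (Finset.notMem_empty _)
    · exact h
  have hup := legal_card_upper (webG n k) C hleg (l.length - 1) 1 (by omega) (le_refl 1)
  rw [Fintype.card_fin, nUnion_take_one _ _ hpos] at hup
  have hge := card_gN_web_mem hk hn C (show (l[0]'hpos) ∈ C by rw [hC]; trivial)
  omega

/-- For the web graph `W_n^k` with `n ≥ 2(k+1)` and `m = n − 2k` if `C = V`,
`m = n − 2k + 1` otherwise: `γ_gr(W_n^k;C) = m` iff `C = V` or condition (ii) holds; in all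
other cases `γ_gr(W_n^k;C) = m − 1`. -/
theorem grundy_web (n k : ℕ) (hk : 1 ≤ k) (hn : 2 * (k + 1) ≤ n) (C : Set (Fin n)) (m : ℕ)
    (hm₁ : C = Set.univ → m = n - 2 * k) (hm₂ : C ≠ Set.univ → m = n - 2 * k + 1) :
    (grundy (webG n k) C = m ↔ (C = Set.univ ∨ WebPathCond n k C)) ∧
    (¬ (C = Set.univ ∨ WebPathCond n k C) → grundy (webG n k) C = m - 1) := by
  classical
  set Sset : Set ℕ := {m : ℕ | ∃ l : List (Fin n),
    IsLegal (webG n k) C l ∧ IsDom (webG n k) C l ∧ l.length = m} with hSset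
  have hgr : grundy (webG n k) C = sSup Sset := rfl
  have hbdd : BddAbove Sset := ⟨n - 2*k + 1, fun x hx => grundy_set_facts hk hn C x hx⟩
  have hbase : (n - 2*k) ∈ Sset := by
    obtain ⟨l, h1, h2, h3⟩ := base_exists hk hn C
    exact ⟨l, h1, h2, h3⟩
  have hne : Sset.Nonempty := ⟨n - 2*k, hbase⟩
  have hlower : n - 2*k ≤ sSup Sset := le_csSup hbdd hbase
  by_cases hCuniv : C = Set.univ
  · have hm : m = n - 2*k := hm₁ hCuniv
    have hupper : sSup Sset ≤ n - 2*k := csSup_le hne (grundy_set_facts_univ hk hn C hCuniv)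
    have hval : grundy (webG n k) C = m := by
      rw [hgr, hm]
      omega
    exact ⟨⟨fun _ => Or.inl hCuniv, fun _ => hval⟩, fun hcon => absurd (Or.inl hCuniv) hcon⟩
  · have hm : m = n - 2*k + 1 := hm₂ hCuniv
    by_cases hcond : WebPathCond n k C
    · have hmem : (n - 2*k + 1) ∈ Sset := by
        obtain ⟨l, h1, h2, h3⟩ := cond_to_seq hk hn C hcond
        exact ⟨l, h1, h2, h3⟩
      have hupper : sSup Sset ≤ n - 2*k + 1 := csSup_le hne (grundy_set_facts hk hn C)
      have hval : grundy (webG n k) C = m := by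
        rw [hgr, hm]
        have := le_csSup hbdd hmem
        omega
      exact ⟨⟨fun _ => Or.inr hcond, fun _ => hval⟩, fun hcon => absurd (Or.inr hcond) hcon⟩
    · have hupper : sSup Sset ≤ n - 2*k := by
        apply csSup_le hne
        rintro x hx
        rcases Nat.lt_or_ge x (n - 2*k + 1) with h | h
        · omega
        · exfalso
          have hx1 := grundy_set_facts hk hn C x hx
          have hxeq : x = n - 2*k + 1 := by omega
          obtain ⟨l, hleg, hdom, hlen⟩ := hx
          exact hcond (seq_to_cond hk hn C hleg hdom (by omega))
      have hval : grundy (webG n k) C = n - 2*k := by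
        rw [hgr]
        omega
      constructor
      · constructor
        · intro hcontra
          exfalso
          rw [hval] at hcontra
          omega
        · rintro (h | h)
          · exact absurd h hCuniv
          · exact absurd h hcond
      · intro _
        rw [hval, hm]
        omega


end Final

end LegalSeq
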